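/- For positive semidefinite n×n matrices R, S, the supremum of Re Tr(X†Y) over X, Y with X†X = R, Y†Y = S is achieved at X = R^{1/2} and Y satisfying Y X† = √(X S X†) = X Y†; in particular for every X with X†X = R there exists Y with Y†Y = S and Re Tr(X†Y) = Tr√(X S X†). -/

import Mathlib

open Matrix Kronecker
open scoped ComplexOrder

open scoped Classical in
/-- Positive semidefinite square root (zero if the matrix is not PSD). -/
noncomputable def psqrt {n : Type*} [Fintype n] [DecidableEq n] (A : Matrix n n ℂ) : Matrix n n ℂ :=
  if h : A.PosSemidef then
    (h.1.eigenvectorUnitary : Matrix n n ℂ) * diagonal ((↑) ∘ (Real.sqrt ·) ∘ h.1.eigenvalues) *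
      (star h.1.eigenvectorUnitary : Matrix n n ℂ) else 0

/-- Matrix absolute value `|A| = √(Aᴴ A)`. -/
noncomputable def matAbs {n : Type*} [Fintype n] [DecidableEq n] (A : Matrix n n ℂ) : Matrix n n ℂ :=
  psqrt (Aᴴ * A)

theorem psqrt_herm_sq {n : Type*} [Fintype n] [DecidableEq n] (M : Matrix n n ℂ) (hM : M.PosSemidef) :
    (psqrt M)ᴴ = psqrt M ∧ psqrt M * psqrt M = M := by
  rw [psqrt, dif_pos hM]
  constructor
  · have hDs : star (Complex.ofReal ∘ (Real.sqrt ·) ∘ hM.1.eigenvalues) = (Complex.ofReal ∘ (Real.sqrt ·) ∘ hM.1.eigenvalues) := by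
      funext i; simp
    simp [Matrix.conjTranspose_mul, Matrix.diagonal_conjTranspose, Matrix.mul_assoc, hDs, Matrix.star_eq_conjTranspose]
  · have hU : (star hM.1.eigenvectorUnitary : Matrix n n ℂ) * (hM.1.eigenvectorUnitary : Matrix n n ℂ) = 1 :=
      Matrix.UnitaryGroup.star_mul_self _
    have hD : diagonal ((↑) ∘ (Real.sqrt ·) ∘ hM.1.eigenvalues) * diagonal ((↑) ∘ (Real.sqrt ·) ∘ hM.1.eigenvalues)
        = diagonal (RCLike.ofReal ∘ hM.1.eigenvalues : n → ℂ) := by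
      rw [diagonal_mul_diagonal]; congr 1; funext i
      simp only [Function.comp_apply, ← Complex.ofReal_mul, Real.mul_self_sqrt (hM.eigenvalues_nonneg i)]
      rfl
    calc _ = (hM.1.eigenvectorUnitary : Matrix n n ℂ) * (diagonal ((↑) ∘ (Real.sqrt ·) ∘ hM.1.eigenvalues) *
        ((star hM.1.eigenvectorUnitary : Matrix n n ℂ) * (hM.1.eigenvectorUnitary : Matrix n n ℂ)) *
        diagonal ((↑) ∘ (Real.sqrt ·) ∘ hM.1.eigenvalues)) * (star hM.1.eigenvectorUnitary : Matrix n n ℂ) := by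
          simp only [Matrix.mul_assoc]
      _ = M := by
          rw [hU, Matrix.mul_one, hD]
          conv_rhs => rw [hM.1.spectral_theorem]
          rw [Unitary.conjStarAlgAut_apply]

theorem uhlmann_sup_achieved {n : Type*} [Fintype n] [DecidableEq n]
    (R S : Matrix n n ℂ) (hR : R.PosDef) (hS : S.PosDef) :
    ∀ X : Matrix n n ℂ, Xᴴ * X = R →
      ∃ Y : Matrix n n ℂ, Yᴴ * Y = S ∧
        Y * Xᴴ = psqrt (X * S * Xᴴ) ∧ X * Yᴴ = psqrt (X * S * Xᴴ) ∧
        ((Xᴴ * Y).trace).re = ((psqrt (X * S * Xᴴ)).trace).re := by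
  intro X hX
  -- X is invertible
  have hdet : IsUnit X.det := by
    have h1 : R.det ≠ 0 := hR.det_pos.ne'
    rw [← hX, Matrix.det_mul] at h1
    exact isUnit_iff_ne_zero.mpr fun h => h1 (by rw [h, mul_zero])
  have hdetH : IsUnit Xᴴ.det := by
    rw [Matrix.det_conjTranspose]; exact hdet.star
  have hXinv : Invertible X := X.invertibleOfIsUnitDet hdet
  have hXHinv : Invertible Xᴴ := X.invertibleConjTranspose
  -- M = X S Xᴴ is PSD
  have hM : (X * S * Xᴴ).PosSemidef := by
    have := hS.posSemidef.mul_mul_conjTranspose_same X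
    simpa [Matrix.mul_assoc] using this
  obtain ⟨Q, hpsqrt⟩ : ∃ Q, psqrt (X * S * Xᴴ) = Q := ⟨_, rfl⟩
  have hQherm : Qᴴ = Q := by rw [← hpsqrt]; exact (psqrt_herm_sq _ hM).1
  have hQQ : Q * Q = X * S * Xᴴ := by rw [← hpsqrt]; exact (psqrt_herm_sq _ hM).2
  refine ⟨Q * (Xᴴ)⁻¹, ?_, ?_, ?_, ?_⟩
  · have h1 : ((Xᴴ)⁻¹)ᴴ = X⁻¹ := by
      rw [Matrix.conjTranspose_nonsing_inv, conjTranspose_conjTranspose]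
    calc (Q * (Xᴴ)⁻¹)ᴴ * (Q * (Xᴴ)⁻¹)
        = X⁻¹ * (Q * Q) * (Xᴴ)⁻¹ := by
          rw [Matrix.conjTranspose_mul, h1, hQherm]; noncomm_ring
      _ = X⁻¹ * X * S * (Xᴴ * (Xᴴ)⁻¹) := by rw [hQQ]; noncomm_ring
      _ = S := by
          rw [Matrix.nonsing_inv_mul _ hdet, Matrix.mul_nonsing_inv _ hdetH, one_mul, mul_one]
  · rw [hpsqrt, Matrix.mul_assoc, Matrix.nonsing_inv_mul _ hdetH, mul_one]
  · rw [hpsqrt, Matrix.conjTranspose_mul, Matrix.conjTranspose_nonsing_inv,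
      conjTranspose_conjTranspose, hQherm, ← Matrix.mul_assoc,
      Matrix.mul_nonsing_inv _ hdet, one_mul]
  · rw [hpsqrt]
    have : (Xᴴ * (Q * (Xᴴ)⁻¹)).trace = Q.trace := by
      rw [Matrix.trace_mul_comm, Matrix.mul_assoc, Matrix.nonsing_inv_mul _ hdetH, mul_one]
    rw [this]
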